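/- Let C be an N×M and D an M×N matrix with nonnegative integer entries, and set A = CD, B = DC. Then the matrix identity A^G · D̂ = D̂ · B^G holds, where A^G and B^G are the edge transition matrices of A and B realized on the pair edge sets E_A and E_B. Consequently, left multiplication by D̂ᵀ maps the subgroup (I−(A^G)ᵀ)ℤ^{E_A} into (I−(B^G)ᵀ)ℤ^{E_B}, and hence induces a group homomorphism Φ_{D̂ᵀ} : ℤ^{E_A}/(I−(A^G)ᵀ)ℤ^{E_A} → ℤ^{E_B}/(I−(B^G)ᵀ)ℤ^{E_B}. -/

import Mathlib

open Matrix

/-- The edge set of the directed graph of a rectangular matrix `C` with nonnegative integer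
entries: there are `C i j` edges from vertex `i` to vertex `j`. -/
def Edge {N M : ℕ} (C : Matrix (Fin N) (Fin M) ℕ) : Type :=
  Σ i : Fin N, Σ j : Fin M, Fin (C i j)

instance {N M : ℕ} (C : Matrix (Fin N) (Fin M) ℕ) : Fintype (Edge C) := by
  unfold Edge; have : ∀ i, Fintype (Σ j : Fin M, Fin (C i j)) := fun _ => inferInstance
  infer_instance

instance {N M : ℕ} (C : Matrix (Fin N) (Fin M) ℕ) : DecidableEq (Edge C) := by
  unfold Edge; infer_instance

/-- The source vertex of an edge. -/
def Edge.src {N M : ℕ} {C : Matrix (Fin N) (Fin M) ℕ} (e : Edge C) : Fin N := e.1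

/-- The target vertex of an edge. -/
def Edge.tar {N M : ℕ} {C : Matrix (Fin N) (Fin M) ℕ} (e : Edge C) : Fin M := e.2.1

/-- The edge set of `A = CD`, realized as composable pairs `(c, d)` of edges of `C` and `D`. -/
def PairEdgeA {N M : ℕ} (C : Matrix (Fin N) (Fin M) ℕ) (D : Matrix (Fin M) (Fin N) ℕ) :
    Type :=
  {p : Edge C × Edge D // p.1.tar = p.2.src}

/-- The edge set of `B = DC`, realized as composable pairs `(d, c)` of edges of `D` and `C`. -/
def PairEdgeB {N M : ℕ} (C : Matrix (Fin N) (Fin M) ℕ) (D : Matrix (Fin M) (Fin N) ℕ) :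
    Type :=
  {p : Edge D × Edge C // p.1.tar = p.2.src}

instance {N M : ℕ} (C : Matrix (Fin N) (Fin M) ℕ) (D : Matrix (Fin M) (Fin N) ℕ) :
    Fintype (PairEdgeA C D) := by unfold PairEdgeA; infer_instance

instance {N M : ℕ} (C : Matrix (Fin N) (Fin M) ℕ) (D : Matrix (Fin M) (Fin N) ℕ) :
    Fintype (PairEdgeB C D) := by unfold PairEdgeB; infer_instance

instance {N M : ℕ} (C : Matrix (Fin N) (Fin M) ℕ) (D : Matrix (Fin M) (Fin N) ℕ) :
    DecidableEq (PairEdgeA C D) := by unfold PairEdgeA; infer_instance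

instance {N M : ℕ} (C : Matrix (Fin N) (Fin M) ℕ) (D : Matrix (Fin M) (Fin N) ℕ) :
    DecidableEq (PairEdgeB C D) := by unfold PairEdgeB; infer_instance

/-- Let `C`, `D` be rectangular nonnegative integer matrices, `A = CD`,
`B = DC`.  Then `A^G · D̂ = D̂ · B^G`, where `A^G`, `B^G` are the edge transition matrices of
`A` and `B` realized on the pair edge sets, and consequently left multiplication by `D̂ᵀ`
maps `(I−(A^G)ᵀ)ℤ^{E_A}` into `(I−(B^G)ᵀ)ℤ^{E_B}` and induces a group homomorphism of the
quotient groups. -/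
theorem stmt_4 (N M : ℕ) (C : Matrix (Fin N) (Fin M) ℕ) (D : Matrix (Fin M) (Fin N) ℕ) :
    let AG : Matrix (PairEdgeA C D) (PairEdgeA C D) ℤ :=
      Matrix.of fun a a' => if a.val.2.tar = a'.val.1.src then 1 else 0
    let BG : Matrix (PairEdgeB C D) (PairEdgeB C D) ℤ :=
      Matrix.of fun b b' => if b.val.2.tar = b'.val.1.src then 1 else 0
    let Dhat : Matrix (PairEdgeA C D) (PairEdgeB C D) ℤ :=
      Matrix.of fun a b => if a.val.2 = b.val.1 then 1 else 0
    AG * Dhat = Dhat * BG ∧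
    (∀ v ∈ AddMonoidHom.range (1 - AGᵀ).mulVecLin.toAddMonoidHom,
        Dhatᵀ.mulVec v ∈ AddMonoidHom.range (1 - BGᵀ).mulVecLin.toAddMonoidHom) ∧
    ∃ Φ : ((PairEdgeA C D → ℤ) ⧸ AddMonoidHom.range (1 - AGᵀ).mulVecLin.toAddMonoidHom) →+
          ((PairEdgeB C D → ℤ) ⧸ AddMonoidHom.range (1 - BGᵀ).mulVecLin.toAddMonoidHom),
      ∀ v : PairEdgeA C D → ℤ,
        Φ (QuotientAddGroup.mk v) = QuotientAddGroup.mk (Dhatᵀ.mulVec v) := by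
  intro AG BG Dhat
  have key : AG * Dhat = Dhat * BG := by
    ext a b
    simp only [AG, BG, Dhat, Matrix.mul_apply, Matrix.of_apply, ite_zero_mul_ite_zero,
      one_mul, ← ite_and]
    rw [Finset.sum_boole, Finset.sum_boole]
    congr 1
    refine Finset.card_bij'
      (fun a' ha' => (⟨(a.val.2, a'.val.1), (Finset.mem_filter.mp ha').2.1⟩ : PairEdgeB C D))
      (fun b' hb' => (⟨(b'.val.2, b.val.1), (Finset.mem_filter.mp hb').2.2⟩ : PairEdgeA C D))
      ?_ ?_ ?_ ?_
    · intro a' ha'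
      obtain ⟨-, h1, h2⟩ := Finset.mem_filter.mp ha'
      refine Finset.mem_filter.mpr ⟨Finset.mem_univ _, rfl, ?_⟩
      show a'.val.1.tar = b.val.1.src
      rw [a'.property, h2]
    · intro b' hb'
      obtain ⟨-, h1, h2⟩ := Finset.mem_filter.mp hb'
      refine Finset.mem_filter.mpr ⟨Finset.mem_univ _, ?_, rfl⟩
      show a.val.2.tar = b'.val.2.src
      rw [← b'.property, ← h1]
    · intro a' ha'
      obtain ⟨-, h1, h2⟩ := Finset.mem_filter.mp ha'
      exact Subtype.ext (Prod.ext rfl h2.symm)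
    · intro b' hb'
      obtain ⟨-, h1, h2⟩ := Finset.mem_filter.mp hb'
      exact Subtype.ext (Prod.ext h1 rfl)
  have key2 : (1 - BGᵀ) * Dhatᵀ = Dhatᵀ * (1 - AGᵀ) := by
    rw [Matrix.sub_mul, Matrix.mul_sub, Matrix.one_mul, Matrix.mul_one, ← Matrix.transpose_mul, ← Matrix.transpose_mul, key]
  have hmap : ∀ v ∈ AddMonoidHom.range (1 - AGᵀ).mulVecLin.toAddMonoidHom,
      Dhatᵀ.mulVec v ∈ AddMonoidHom.range (1 - BGᵀ).mulVecLin.toAddMonoidHom := by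
    rintro v ⟨w, rfl⟩
    exact ⟨Dhatᵀ.mulVec w, by
      simp only [Matrix.mulVecLin_apply, LinearMap.toAddMonoidHom_coe, ← Matrix.mulVec_mulVec,
        ← key2, Matrix.mulVec_mulVec]⟩
  refine ⟨key, hmap, ?_⟩
  refine ⟨QuotientAddGroup.map _ _ Dhatᵀ.mulVecLin.toAddMonoidHom ?_, fun v => rfl⟩
  intro v hv
  exact hmap v hv
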